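/- Define κ : ℝ → ℝ by κ(t) = 0 for t ≥ 0 and κ(t) = 1 + t − e^t for t < 0. Let N ≥ 1, let w ∈ ℂ^N, R > 0, and let a, b ∈ ℂ^N. Define u : ℂ → ℝ by u(τ) = κ( log( |a + τ·b − w|² / R² ) ). Then: (i) at every τ₀ ∈ ℂ with 0 < |a + τ₀·b − w| < R, the function u is C² near τ₀ and its Laplacian (with respect to ℂ ≅ ℝ²) satisfies Δu(τ₀) ≥ −4|b|²/R²; and (ii) u vanishes in a neighborhood of every τ₀ with |a + τ₀·b − w| > R, hence Δu(τ₀) = 0 there. -/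

import Mathlib

open Filter

/-- The cut-off profile of Berndtsson–Ortega: `κ(t) = 0` for `t ≥ 0` and `κ(t) = 1 + t − eᵗ`
for `t < 0`. -/
noncomputable def kappaBO (t : ℝ) : ℝ := if 0 ≤ t then 0 else 1 + t - Real.exp t

/-- The Laplacian of `u : ℂ → ℝ` with respect to the identification `ℂ ≅ ℝ²`:
the sum of the second derivatives in the directions `1` and `i`. -/
noncomputable def planarLaplacian (u : ℂ → ℝ) (τ : ℂ) : ℝ :=
  iteratedFDeriv ℝ 2 u τ ![1, 1] + iteratedFDeriv ℝ 2 u τ ![Complex.I, Complex.I]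

/-- The bilinear map `z ↦ (v ↦ 2 (z v).re)` used as the derivative of `τ ↦ ‖c + τ b‖²`. -/
noncomputable def ellBO : ℂ →L[ℝ] (ℂ →L[ℝ] ℝ) :=
  (2 : ℝ) • ((ContinuousLinearMap.compL ℝ ℂ ℂ ℝ Complex.reCLM).comp
    (ContinuousLinearMap.mul ℝ ℂ))

lemma ellBO_apply (z v : ℂ) : ellBO z v = 2 * (z * v).re := by
  simp [ellBO, ContinuousLinearMap.compL_apply]

/-- Conjugation as a real-linear continuous map. -/
noncomputable def conjBO : ℂ →L[ℝ] ℂ := Complex.conjCLE.toContinuousLinearMap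

lemma conjBO_apply (z : ℂ) : conjBO z = (starRingEnd ℂ) z := rfl

set_option maxHeartbeats 1000000

/-- Lemma 8.2 of the paper, tested along complex lines: for `w, a, b ∈ ℂ^N`, `R > 0`, and
`u(τ) = κ(log(|a + τb − w|²/R²))`, one has: (i) at every `τ₀` with
`0 < |a + τ₀b − w| < R`, `u` is `C²` near `τ₀` and `Δu(τ₀) ≥ −4|b|²/R²`; (ii) `u` vanishes
near every `τ₀` with `|a + τ₀b − w| > R`, and `Δu(τ₀) = 0` there. -/
theorem stmt_15 {N : ℕ} (hN : 1 ≤ N)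
    (w a b : EuclideanSpace ℂ (Fin N)) (R : ℝ) (hR : 0 < R)
    (u : ℂ → ℝ)
    (hu : ∀ τ : ℂ, u τ = kappaBO (Real.log (‖a + τ • b - w‖ ^ 2 / R ^ 2))) :
    (∀ τ₀ : ℂ, 0 < ‖a + τ₀ • b - w‖ → ‖a + τ₀ • b - w‖ < R →
      ContDiffAt ℝ 2 u τ₀ ∧ -(4 * ‖b‖ ^ 2 / R ^ 2) ≤ planarLaplacian u τ₀) ∧
    (∀ τ₀ : ℂ, R < ‖a + τ₀ • b - w‖ →
      (∀ᶠ τ in nhds τ₀, u τ = 0) ∧ planarLaplacian u τ₀ = 0) := by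
  classical
  have hR2 : (0:ℝ) < R ^ 2 := by positivity
  set c : EuclideanSpace ℂ (Fin N) := a - w with hcdef
  set A : ℝ := ‖c‖ ^ 2 with hAdef
  set B : ℝ := ‖b‖ ^ 2 with hBdef
  set γ : ℂ := (inner ℂ c b : ℂ) with hγdef
  set F : ℂ → ℝ := fun τ => A + 2 * (τ * γ).re + B * Complex.normSq τ with hFdef
  have hz : ∀ τ : ℂ, a + τ • b - w = c + τ • b := fun τ => by rw [hcdef]; abel
  have hFeq : ∀ τ : ℂ, ‖a + τ • b - w‖ ^ 2 = F τ := by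
    intro τ
    rw [hz τ, norm_add_sq (𝕜 := ℂ), hFdef]
    simp [hAdef, hBdef, hγdef, inner_smul_right, norm_smul, Complex.normSq_eq_norm_sq]
    ring
  -- the auxiliary complex function h τ = γ + B * conj τ
  set h : ℂ → ℂ := fun τ => γ + (B : ℂ) * (starRingEnd ℂ) τ with hhdef
  -- derivative of F
  have hF' : ∀ τ : ℂ, HasFDerivAt F (ellBO (h τ)) τ := by
    intro τ
    have e1 : HasFDerivAt (fun z : ℂ => z.re) Complex.reCLM τ := Complex.reCLM.hasFDerivAt
    have e2 : HasFDerivAt (fun z : ℂ => z.im) Complex.imCLM τ := Complex.imCLM.hasFDerivAt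
    have e3 : HasFDerivAt (fun z : ℂ => (z * γ).re)
        (Complex.reCLM.comp ((ContinuousLinearMap.mul ℝ ℂ).flip γ)) τ :=
      (Complex.reCLM.comp ((ContinuousLinearMap.mul ℝ ℂ).flip γ)).hasFDerivAt
    have e5 := (e1.mul e1).add (e2.mul e2)
    have e6 := ((e3.const_mul (2:ℝ)).const_add A).add (e5.const_mul B)
    have hFeq2 : F = fun τ : ℂ => A + 2 * (τ * γ).re + B * (τ.re * τ.re + τ.im * τ.im) := by
      funext z; rw [hFdef]; simp [Complex.normSq_apply]
    rw [hFeq2]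
    refine e6.congr_fderiv ?_
    ext v
    simp only [ellBO_apply, hhdef, ContinuousLinearMap.add_apply,
      ContinuousLinearMap.coe_smul', Pi.smul_apply, ContinuousLinearMap.coe_comp',
      Function.comp_apply, ContinuousLinearMap.flip_apply, ContinuousLinearMap.mul_apply',
      Complex.reCLM_apply, Complex.imCLM_apply, smul_eq_mul, Complex.add_re, Complex.mul_re,
      Complex.add_im, Complex.mul_im,
      Complex.ofReal_re, Complex.ofReal_im, Complex.conj_re, Complex.conj_im]
    ring
  have hFC : ContDiff ℝ 2 F := by
    have h1 : ContDiff ℝ 2 fun z : ℂ => (z * γ).re :=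
      (Complex.reCLM.comp ((ContinuousLinearMap.mul ℝ ℂ).flip γ)).contDiff
    have h2 : ContDiff ℝ 2 fun z : ℂ => Complex.normSq z := by
      rw [show (fun z : ℂ => Complex.normSq z) = fun z : ℂ => z.re * z.re + z.im * z.im from
        funext fun z => Complex.normSq_apply z]
      exact (Complex.reCLM.contDiff.mul Complex.reCLM.contDiff).add
        (Complex.imCLM.contDiff.mul Complex.imCLM.contDiff)
    exact (contDiff_const.add (contDiff_const.mul h1)).add (contDiff_const.mul h2)
  -- the smooth local model g
  set g : ℂ → ℝ := fun τ => 1 + (Real.log (F τ) - Real.log (R ^ 2)) - (R ^ 2)⁻¹ * F τ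
    with hgdef
  have hg' : ∀ τ : ℂ, 0 < F τ →
      HasFDerivAt g (((F τ)⁻¹ - (R ^ 2)⁻¹) • ellBO (h τ)) τ := by
    intro τ hτ
    have hlog : HasFDerivAt (fun τ : ℂ => Real.log (F τ)) ((F τ)⁻¹ • ellBO (h τ)) τ :=
      (hF' τ).log hτ.ne'
    have h1 : HasFDerivAt (fun τ : ℂ => 1 + (Real.log (F τ) - Real.log (R ^ 2)))
        ((F τ)⁻¹ • ellBO (h τ)) τ := (hlog.sub_const _).const_add 1
    have h2 : HasFDerivAt (fun τ : ℂ => (R ^ 2)⁻¹ * F τ) ((R ^ 2)⁻¹ • ellBO (h τ)) τ :=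
      (hF' τ).const_mul _
    have := h1.sub h2
    rwa [← sub_smul] at this
  constructor
  · -- part (i)
    intro τ₀ h0 hlt
    have hF0 : 0 < F τ₀ := by rw [← hFeq]; positivity
    have hFR : F τ₀ < R ^ 2 := by
      rw [← hFeq]
      exact pow_lt_pow_left₀ hlt (norm_nonneg _) two_ne_zero
    have hFcont : Continuous F := hFC.continuous
    have hev : ∀ᶠ τ in nhds τ₀, 0 < F τ ∧ F τ < R ^ 2 := by
      have : IsOpen {τ : ℂ | 0 < F τ ∧ F τ < R ^ 2} :=
        (isOpen_lt continuous_const hFcont).inter (isOpen_lt hFcont continuous_const)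
      exact this.mem_nhds ⟨hF0, hFR⟩
    have hug : u =ᶠ[nhds τ₀] g := by
      refine hev.mono fun τ hτ => ?_
      obtain ⟨h1, h2⟩ := hτ
      have hpos : 0 < F τ / R ^ 2 := div_pos h1 hR2
      have hlt1 : F τ / R ^ 2 < 1 := (div_lt_one hR2).2 h2
      have hlogneg : Real.log (F τ / R ^ 2) < 0 := Real.log_neg hpos hlt1
      rw [hu τ, hFeq τ, kappaBO, if_neg (not_le.2 hlogneg), Real.exp_log hpos,
        Real.log_div h1.ne' hR2.ne', hgdef]
      ring
    have hgC : ContDiffAt ℝ 2 g τ₀ := by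
      have hl : ContDiffAt ℝ 2 (fun τ : ℂ => Real.log (F τ)) τ₀ :=
        hFC.contDiffAt.log hF0.ne'
      exact (contDiffAt_const.add (hl.sub contDiffAt_const)).sub
        (contDiffAt_const.mul hFC.contDiffAt)
    refine ⟨hgC.congr_of_eventuallyEq hug, ?_⟩
    -- second derivative
    set G : ℂ → (ℂ →L[ℝ] ℝ) := fun τ => ((F τ)⁻¹ - (R ^ 2)⁻¹) • ellBO (h τ) with hGdef
    have hfd : fderiv ℝ u =ᶠ[nhds τ₀] G := by
      refine (hug.fderiv).trans (hev.mono fun τ hτ => ?_)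
      exact (hg' τ hτ.1).fderiv
    -- derivative of G at τ₀
    have hinv : HasFDerivAt (fun τ : ℂ => (F τ)⁻¹)
        ((-((F τ₀) ^ 2)⁻¹) • ellBO (h τ₀)) τ₀ :=
      (hasDerivAt_inv hF0.ne').comp_hasFDerivAt τ₀ (hF' τ₀)
    have hs : HasFDerivAt (fun τ : ℂ => (F τ)⁻¹ - (R ^ 2)⁻¹)
        ((-((F τ₀) ^ 2)⁻¹) • ellBO (h τ₀)) τ₀ := hinv.sub_const _
    have hh : HasFDerivAt h ((B : ℂ) • conjBO) τ₀ := by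
      have := (conjBO.hasFDerivAt (x := τ₀)).const_mul (B : ℂ)
      exact this.const_add γ
    have hm : HasFDerivAt (fun τ : ℂ => ellBO (h τ))
        (ellBO.comp ((B : ℂ) • conjBO)) τ₀ :=
      ellBO.hasFDerivAt.comp τ₀ hh
    have hG : HasFDerivAt G
        (((F τ₀)⁻¹ - (R ^ 2)⁻¹) • (ellBO.comp ((B : ℂ) • conjBO)) +
          ((-((F τ₀) ^ 2)⁻¹) • ellBO (h τ₀)).smulRight (ellBO (h τ₀))) τ₀ := hs.smul hm
    have h4 : fderiv ℝ (fderiv ℝ u) τ₀ =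
        ((F τ₀)⁻¹ - (R ^ 2)⁻¹) • (ellBO.comp ((B : ℂ) • conjBO)) +
          ((-((F τ₀) ^ 2)⁻¹) • ellBO (h τ₀)).smulRight (ellBO (h τ₀)) := by
      rw [hfd.fderiv_eq, hG.fderiv]
    have hval : planarLaplacian u τ₀ =
        4 * B * ((F τ₀)⁻¹ - (R ^ 2)⁻¹) -
          4 * ((h τ₀).re ^ 2 + (h τ₀).im ^ 2) * ((F τ₀) ^ 2)⁻¹ := by
      rw [planarLaplacian, iteratedFDeriv_two_apply, iteratedFDeriv_two_apply]
      simp only [Matrix.cons_val_zero, Matrix.cons_val_one, Matrix.head_cons]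
      rw [h4]
      have e1 : ellBO (h τ₀) 1 = 2 * (h τ₀).re := by rw [ellBO_apply, mul_one]
      have eI : ellBO (h τ₀) Complex.I = -(2 * (h τ₀).im) := by
        rw [ellBO_apply, Complex.mul_re]; simp
      have c1 : ellBO ((B : ℂ) * (starRingEnd ℂ) 1) 1 = 2 * B := by
        rw [ellBO_apply]; simp
      have cI : ellBO ((B : ℂ) * (starRingEnd ℂ) Complex.I) Complex.I = 2 * B := by
        rw [ellBO_apply, Complex.conj_I, mul_assoc, neg_mul, Complex.I_mul_I]
        simp
      simp only [ContinuousLinearMap.add_apply, ContinuousLinearMap.coe_smul',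
        Pi.smul_apply, ContinuousLinearMap.coe_comp', Function.comp_apply,
        ContinuousLinearMap.smulRight_apply, ContinuousLinearMap.smul_apply,
        conjBO_apply, smul_eq_mul]
      rw [c1, cI, e1, eI]
      ring
    have hp : F τ₀ ≠ 0 := hF0.ne'
    have hCS : γ.re ^ 2 + γ.im ^ 2 ≤ A * B := by
      have h1 : ‖γ‖ ≤ ‖c‖ * ‖b‖ := by
        rw [hγdef]; exact norm_inner_le_norm (𝕜 := ℂ) c b
      have h3 : ‖γ‖ ^ 2 = γ.re ^ 2 + γ.im ^ 2 := by
        rw [Complex.sq_norm, Complex.normSq_apply]; ring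
      have h2 := pow_le_pow_left₀ (norm_nonneg γ) h1 2
      rw [mul_pow] at h2
      rw [hAdef, hBdef]
      linarith [h2, h3]
    have hkey : (h τ₀).re ^ 2 + (h τ₀).im ^ 2 ≤ B * F τ₀ := by
      have hFv : F τ₀ = A + 2 * (τ₀ * γ).re + B * Complex.normSq τ₀ := rfl
      have hhre : (h τ₀).re = γ.re + B * τ₀.re := by
        simp [hhdef, Complex.add_re, Complex.mul_re]
      have hhim : (h τ₀).im = γ.im - B * τ₀.im := by
        simp [hhdef, Complex.add_im, Complex.mul_im]
        ring
      rw [hFv, hhre, hhim, Complex.normSq_apply, Complex.mul_re]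
      nlinarith [hCS]
    have key2 : 0 ≤ 4 * B * (F τ₀)⁻¹ -
        4 * ((h τ₀).re ^ 2 + (h τ₀).im ^ 2) * ((F τ₀) ^ 2)⁻¹ := by
      have heq : 4 * B * (F τ₀)⁻¹ -
          4 * ((h τ₀).re ^ 2 + (h τ₀).im ^ 2) * ((F τ₀) ^ 2)⁻¹
          = 4 * (B * F τ₀ - ((h τ₀).re ^ 2 + (h τ₀).im ^ 2)) * ((F τ₀) ^ 2)⁻¹ := by
        field_simp
      rw [heq]
      have h5 : (0:ℝ) ≤ B * F τ₀ - ((h τ₀).re ^ 2 + (h τ₀).im ^ 2) := sub_nonneg.2 hkey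
      have h6 : (0:ℝ) ≤ ((F τ₀) ^ 2)⁻¹ := by positivity
      exact mul_nonneg (mul_nonneg (by norm_num) h5) h6
    have expand : 4 * B * ((F τ₀)⁻¹ - (R ^ 2)⁻¹) -
        4 * ((h τ₀).re ^ 2 + (h τ₀).im ^ 2) * ((F τ₀) ^ 2)⁻¹
        = (4 * B * (F τ₀)⁻¹ -
            4 * ((h τ₀).re ^ 2 + (h τ₀).im ^ 2) * ((F τ₀) ^ 2)⁻¹) - 4 * B / R ^ 2 := by
      rw [div_eq_mul_inv]
      ring
    rw [hval, expand]
    linarith [key2]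
  · -- part (ii)
    intro τ₀ hgt
    have hF0 : R ^ 2 < F τ₀ := by
      rw [← hFeq]
      exact pow_lt_pow_left₀ hgt (le_of_lt hR) two_ne_zero
    have hFcont : Continuous F := hFC.continuous
    have hev : ∀ᶠ τ in nhds τ₀, R ^ 2 < F τ :=
      (isOpen_lt continuous_const hFcont).mem_nhds hF0
    have hu0 : ∀ᶠ τ in nhds τ₀, u τ = 0 := by
      refine hev.mono fun τ hτ => ?_
      have h1 : (1:ℝ) ≤ F τ / R ^ 2 := (one_le_div hR2).2 hτ.le
      have : 0 ≤ Real.log (F τ / R ^ 2) := Real.log_nonneg h1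
      rw [hu τ, hFeq τ, kappaBO, if_pos this]
    refine ⟨hu0, ?_⟩
    have hfd : fderiv ℝ u =ᶠ[nhds τ₀] fun _ => (0 : ℂ →L[ℝ] ℝ) := by
      have hueq : u =ᶠ[nhds τ₀] fun _ => (0:ℝ) := hu0
      refine hueq.fderiv.trans ?_
      exact Eventually.of_forall fun τ => fderiv_const_apply 0
    have h4 : fderiv ℝ (fderiv ℝ u) τ₀ = 0 := by
      rw [hfd.fderiv_eq, fderiv_const_apply]
    rw [planarLaplacian, iteratedFDeriv_two_apply, iteratedFDeriv_two_apply, h4]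
    simp
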